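/- If the population covariance is the identity, Σ = I, then the augmented estimator never has larger standard error than the standard estimator: L_std(θ̂_aug) ≤ L_std(θ̂_std). -/

import Mathlib

open Matrix BigOperators

/-- Standard (population) error of `θ` w.r.t. covariance `S` and true parameter `θstar`:
`(θ − θ⋆)ᵀ Σ (θ − θ⋆)`. -/
def Lstd {d : ℕ} (S : Matrix (Fin d) (Fin d) ℝ) (θstar θ : Fin d → ℝ) : ℝ :=
  (θ - θstar) ⬝ᵥ S.mulVec (θ - θstar)

/-- `θ` is the minimum Euclidean-norm solution of the constraint `C`. -/
def IsMinNormInterp {d : ℕ} (C : (Fin d → ℝ) → Prop) (θ : Fin d → ℝ) : Prop :=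
  C θ ∧ ∀ θ', C θ' → θ ⬝ᵥ θ ≤ θ' ⬝ᵥ θ'

/-- `P` is the orthogonal projection matrix onto `Null(X)`:
symmetric, idempotent, range contained in `Null(X)`, and fixing `Null(X)`. -/
def IsOrthProjNull {n d : ℕ} (X : Matrix (Fin n) (Fin d) ℝ)
    (P : Matrix (Fin d) (Fin d) ℝ) : Prop :=
  Pᵀ = P ∧ P * P = P ∧ (∀ v, X.mulVec (P.mulVec v) = 0) ∧
    (∀ v, X.mulVec v = 0 → P.mulVec v = v)

/-- `P` is the orthogonal projection matrix onto `Null(X1) ∩ Null(X2)`. -/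
def IsOrthProjNull2 {n m d : ℕ} (X1 : Matrix (Fin n) (Fin d) ℝ)
    (X2 : Matrix (Fin m) (Fin d) ℝ) (P : Matrix (Fin d) (Fin d) ℝ) : Prop :=
  Pᵀ = P ∧ P * P = P ∧ (∀ v, X1.mulVec (P.mulVec v) = 0 ∧ X2.mulVec (P.mulVec v) = 0) ∧
    (∀ v, X1.mulVec v = 0 → X2.mulVec v = 0 → P.mulVec v = v)


lemma ortho_of_min {d : ℕ} (θ v : Fin d → ℝ)
    (h : ∀ t : ℝ, θ ⬝ᵥ θ ≤ (θ + t • v) ⬝ᵥ (θ + t • v)) : θ ⬝ᵥ v = 0 := by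
  have hq : (0:ℝ) ≤ v ⬝ᵥ v := Finset.sum_nonneg fun i _ => mul_self_nonneg _
  set c : ℝ := θ ⬝ᵥ v with hc
  have key : ∀ t : ℝ, 0 ≤ 2 * t * c + t ^ 2 * (v ⬝ᵥ v) := by
    intro t
    have := h t
    have hexp : (θ + t • v) ⬝ᵥ (θ + t • v)
        = θ ⬝ᵥ θ + 2 * t * c + t ^ 2 * (v ⬝ᵥ v) := by
      simp [add_dotProduct, dotProduct_add, smul_dotProduct, dotProduct_smul,
        dotProduct_comm v θ, hc, smul_eq_mul]
      ring
    nlinarith [this, hexp]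
  set q : ℝ := v ⬝ᵥ v with hqdef
  have hpos : (0:ℝ) < q + 1 := by linarith
  set t : ℝ := -c / (q + 1) with htdef
  have hct : c = -(t * (q + 1)) := by
    rw [htdef, div_mul_cancel₀ _ hpos.ne']; ring
  have h5 : 0 ≤ 2 * t * (-(t * (q + 1))) + t ^ 2 * q := by
    have := key t; rw [hct] at this; linarith
  have ht2 : t ^ 2 = 0 := by nlinarith [sq_nonneg t, mul_nonneg hq (sq_nonneg t)]
  have ht0 : t = 0 := by
    have := sq_eq_zero_iff.mp ht2
    exact this
  rw [hct, ht0]; ring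

/-- Corollary 2, condition 1 (paper): if the population covariance is the identity,
the augmented estimator never has larger standard error than the standard estimator. -/
theorem identity_covariance_augmentation_safe {n m d : ℕ}
    (Xstd : Matrix (Fin n) (Fin d) ℝ) (Xext : Matrix (Fin m) (Fin d) ℝ)
    (S : Matrix (Fin d) (Fin d) ℝ) (hS : S.PosSemidef) (hSI : S = 1)
    (θstar θstd θaug : Fin d → ℝ)
    (hstd : IsMinNormInterp (fun θ => Xstd.mulVec θ = Xstd.mulVec θstar) θstd)
    (haug : IsMinNormInterp
      (fun θ => Xstd.mulVec θ = Xstd.mulVec θstar ∧ Xext.mulVec θ = Xext.mulVec θstar) θaug) :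
    Lstd S θstar θaug ≤ Lstd S θstar θstd := by
  obtain ⟨h1, hmin1⟩ := hstd
  obtain ⟨⟨h2a, h2b⟩, hmin2⟩ := haug
  set v : Fin d → ℝ := θaug - θstar with hv
  set u : Fin d → ℝ := θstd - θstar with hu
  have hXsv : Xstd.mulVec v = 0 := by
    simp [hv, Matrix.mulVec_sub, h2a]
  have hXev : Xext.mulVec v = 0 := by
    simp [hv, Matrix.mulVec_sub, h2b]
  have hXsu : Xstd.mulVec u = 0 := by
    simp [hu, Matrix.mulVec_sub, h1]
  have hA : θaug ⬝ᵥ v = 0 := by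
    apply ortho_of_min
    intro t
    exact hmin2 _ ⟨by simp [Matrix.mulVec_add, Matrix.mulVec_smul, hXsv, h2a],
      by simp [Matrix.mulVec_add, Matrix.mulVec_smul, hXev, h2b]⟩
  have hB : θstd ⬝ᵥ v = 0 := by
    apply ortho_of_min
    intro t
    exact hmin1 _ (by simp [Matrix.mulVec_add, Matrix.mulVec_smul, hXsv, h1])
  have hvv : v ⬝ᵥ v = u ⬝ᵥ v := by
    have h3 : (θaug - θstd) ⬝ᵥ v = 0 := by
      rw [sub_dotProduct, hA, hB, sub_zero]
    have h4 : θaug - θstd = v - u := by simp [hv, hu]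
    rw [h4, sub_dotProduct, sub_eq_zero] at h3
    exact h3
  have hnn : 0 ≤ (u - v) ⬝ᵥ (u - v) := Finset.sum_nonneg fun i _ => mul_self_nonneg _
  have hexp : (u - v) ⬝ᵥ (u - v) = u ⬝ᵥ u - 2 * (u ⬝ᵥ v) + v ⬝ᵥ v := by
    simp only [sub_dotProduct, dotProduct_sub, dotProduct_comm v u]
    ring
  simp only [Lstd, hSI, Matrix.one_mulVec]
  rw [← hv, ← hu]
  nlinarith [hnn, hexp, hvv]
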